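/- Let G be a connected algebraic group acting on an irreducible variety X over an uncountable field, and let v be a divisorial valuation on the function field of X. Suppose that for each rational function f there is a nonempty Zariski-open subset U_f of G such that v(γ·f) takes a common value \bar{v}(f) for all γ in U_f (Sumihiro approximation). If a sequence of divisorial valuations v_i converges pointwise to a G-invariant valuation v, then the associated G-invariant valuations \bar{v}_i also converge pointwise to v. In particular, the set of G-invariant divisorial valuations is dense in the space of G-invariant valuations with the topology of pointwise convergence. -/
import Mathlib


/-- Sumihiro approximation / density of `G`-invariant divisorial valuations.
`K` plays the role of (nonzero) rational functions on `X`, on which the connected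
group `G` acts.  Valuations are modeled as real-valued functions on `K`.
`𝒰` is the collection of nonempty Zariski-open subsets of `G`; over an uncountable
base field every countable intersection of members of `𝒰` is nonempty (`hcap`).
Given divisorial valuations `v i` converging pointwise to a `G`-invariant valuation
`w`, and `G`-invariant valuations `vbar i` attached to `v i` by Sumihiro's lemma
(`hval`: for each `i` and `f` there is `U i f ∈ 𝒰` with `v i (γ • f) = vbar i f`
for all `γ ∈ U i f`), the `vbar i` also converge pointwise to `w`. -/
theorem sumihiro_density {K G : Type*} [Group G] [MulAction G K]
    (𝒰 : Set (Set G))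
    (hcap : ∀ s : ℕ → Set G, (∀ i, s i ∈ 𝒰) → (⋂ i, s i).Nonempty)
    (v vbar : ℕ → K → ℝ) (w : K → ℝ)
    (U : ℕ → K → Set G)
    (hU : ∀ i f, U i f ∈ 𝒰)
    (hval : ∀ i f, ∀ γ ∈ U i f, v i (γ • f) = vbar i f)
    (hconv : ∀ f, Filter.Tendsto (fun i => v i f) Filter.atTop (nhds (w f)))
    (hGinv : ∀ (γ : G) (f : K), w (γ • f) = w f) :
    ∀ f, Filter.Tendsto (fun i => vbar i f) Filter.atTop (nhds (w f)) := by
  intro f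
  obtain ⟨γ, hγ⟩ := hcap (fun i => U i f) (fun i => hU i f)
  have hγ' : ∀ i, γ ∈ U i f := by simpa [Set.mem_iInter] using hγ
  have : (fun i => vbar i f) = fun i => v i (γ • f) := by
    funext i; exact (hval i f γ (hγ' i)).symm
  rw [this, ← hGinv γ f]
  exact hconv (γ • f)
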